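/- Let F be a 2t-repeated k-non-signaling function from ({0,1}^n)^{2t} to ({0,1})^{2t} that is permutation folded and passes the linearity test with probability at least 1-ε, where k ≥ 6. Then for uniformly random R, W ∈ ({0,1}^n)^t and any fixed Q ∈ ({0,1}^n)^t, Pr[F([Q+R;W])_j = F([R;W])_j for all j ∈ {t+1,...,2t}] ≥ 1-4ε, assuming F also passes the consistency test with probability at least 1-ε. -/

import Mathlib

noncomputable def prob {α : Type*} (p : PMF α) (E : Set α) : ℝ :=
  (p.toOuterMeasure E).toReal

def restrictAssign {D A : Type*} {S T : Finset D} (h : T ⊆ S)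
    (f : {x // x ∈ S} → A) : {x // x ∈ T} → A :=
  fun x => f ⟨x.1, h x.2⟩

noncomputable def marginal {D A : Type*} {S : Finset D} (p : PMF ({x // x ∈ S} → A))
    {T : Finset D} (h : T ⊆ S) : PMF ({x // x ∈ T} → A) :=
  p.map (restrictAssign h)

def IsNonSignaling {D A : Type*} [DecidableEq D] (k : ℕ)
    (F : (S : Finset D) → PMF ({x // x ∈ S} → A)) : Prop :=
  ∀ S T : Finset D, S.card ≤ k → T.card ≤ k →
    marginal (F S) (Finset.inter_subset_left : S ∩ T ⊆ S) =
    marginal (F T) (Finset.inter_subset_right : S ∩ T ⊆ T)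

def permQ {t : ℕ} {β : Type*} (π : Equiv.Perm (Fin t)) (Q : Fin t → β) : Fin t → β :=
  fun j => Q (π j)

def IsPermFolded {t : ℕ} {D A : Type*} [DecidableEq D] (k : ℕ)
    (F : (S : Finset (Fin t → D)) → PMF ({Q // Q ∈ S} → (Fin t → A))) : Prop :=
  ∀ (ℓ : ℕ) (Q : Fin ℓ → (Fin t → D)) (π : Fin ℓ → Equiv.Perm (Fin t))
    (b : Fin ℓ → (Fin t → A)), ℓ ≤ k →
    prob (F (Finset.image Q Finset.univ))
      {f | ∀ i : Fin ℓ, f ⟨Q i, Finset.mem_image_of_mem _ (Finset.mem_univ i)⟩ = b i} =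
    prob (F (Finset.image (fun i => permQ (π i) (Q i)) Finset.univ))
      {f | ∀ i : Fin ℓ, f ⟨permQ (π i) (Q i),
          Finset.mem_image_of_mem _ (Finset.mem_univ i)⟩ = permQ (π i) (b i)}

/-- A `2t`-repeated non-signaling function over `{0,1}^n`. -/
abbrev NSFam (n t : ℕ) :=
  (S : Finset (Fin t → Fin n → ZMod 2)) → PMF ({Q // Q ∈ S} → (Fin t → ZMod 2))

/-- Acceptance probability of the linearity test: sample uniform `X, Y`, query `F` on
`{X, Y, X+Y}` and check `F(X) + F(Y) = F(X+Y)` in all coordinates. -/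
noncomputable def linTestAccept {n t : ℕ} (F : NSFam n t) : ℝ :=
  prob ((PMF.uniformOfFintype ((Fin t → Fin n → ZMod 2) × (Fin t → Fin n → ZMod 2))).bind
    fun p => (F {p.1, p.2, p.1 + p.2}).map fun f =>
      (f ⟨p.1, by simp⟩, f ⟨p.2, by simp⟩, f ⟨p.1 + p.2, by simp⟩))
    {y | y.1 + y.2.1 = y.2.2}

/-- Acceptance probability of the consistency test on a `2t`-repeated function: sample
uniform `W, Z₁, Z₂`, query `F` on `{[W;Z₁], [W;Z₂]}` and check that the answers agree
on the first `t` coordinates. -/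
noncomputable def consTestAccept {n t : ℕ} (F : NSFam n (t + t)) : ℝ :=
  prob ((PMF.uniformOfFintype ((Fin t → Fin n → ZMod 2) × (Fin t → Fin n → ZMod 2) ×
      (Fin t → Fin n → ZMod 2))).bind
    fun w => (F {Fin.append w.1 w.2.1, Fin.append w.1 w.2.2}).map fun f =>
      (f ⟨Fin.append w.1 w.2.1, by simp⟩, f ⟨Fin.append w.1 w.2.2, by simp⟩))
    {y : (Fin (t + t) → ZMod 2) × (Fin (t + t) → ZMod 2) |
      ∀ j : Fin t, y.1 (Fin.castAdd t j) = y.2 (Fin.castAdd t j)}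

/-- The self-correction of a `2t`-repeated non-signaling function: a query `Q` is
answered by sampling fresh independent uniform `R, W`, querying `F` on
`{[R;W], [Q+R;W]}`, and returning the first `t` coordinates of
`F([R;W]) + F([Q+R;W])`. -/
noncomputable def selfCorrect {n t : ℕ} (F : NSFam n (t + t)) : NSFam n t :=
  fun S =>
    (PMF.uniformOfFintype (({Q // Q ∈ S} → (Fin t → Fin n → ZMod 2)) ×
        ({Q // Q ∈ S} → (Fin t → Fin n → ZMod 2)))).bind fun RW =>
      (F (Finset.univ.biUnion fun Q : {Q // Q ∈ S} =>
          {Fin.append (RW.1 Q) (RW.2 Q), Fin.append (Q.1 + RW.1 Q) (RW.2 Q)})).map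
        fun f Q j =>
          f ⟨Fin.append (RW.1 Q) (RW.2 Q),
              Finset.mem_biUnion.mpr ⟨Q, Finset.mem_univ _, Finset.mem_insert_self _ _⟩⟩
            (Fin.castAdd t j)
          + f ⟨Fin.append (Q.1 + RW.1 Q) (RW.2 Q),
              Finset.mem_biUnion.mpr ⟨Q, Finset.mem_univ _,
                Finset.mem_insert_of_mem (Finset.mem_singleton_self _)⟩⟩
            (Fin.castAdd t j)

lemma toOM_le_one {α : Type*} (p : PMF α) (E : Set α) : p.toOuterMeasure E ≤ 1 := by
  rw [PMF.toOuterMeasure_apply]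
  refine le_trans (ENNReal.tsum_le_tsum fun a => Set.indicator_apply_le fun _ => le_rfl) ?_
  rw [p.tsum_coe]

lemma toOM_ne_top {α : Type*} (p : PMF α) (E : Set α) : p.toOuterMeasure E ≠ ⊤ :=
  ne_top_of_le_ne_top ENNReal.one_ne_top (toOM_le_one p E)

lemma prob_nonneg {α : Type*} (p : PMF α) (E : Set α) : 0 ≤ prob p E := ENNReal.toReal_nonneg

lemma prob_le_one {α : Type*} (p : PMF α) (E : Set α) : prob p E ≤ 1 := by
  have := toOM_le_one p E
  simpa [prob] using ENNReal.toReal_mono ENNReal.one_ne_top this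

lemma prob_mono {α : Type*} (p : PMF α) {E E' : Set α} (h : E ⊆ E') :
    prob p E ≤ prob p E' :=
  ENNReal.toReal_mono (toOM_ne_top p E') (p.toOuterMeasure.mono h)

lemma prob_map {α β : Type*} (p : PMF α) (g : α → β) (E : Set β) :
    prob (p.map g) E = prob p (g ⁻¹' E) := by
  simp [prob, PMF.toOuterMeasure_map_apply]

lemma prob_fintype_sum {α : Type*} [Fintype α] (p : PMF α) (E : Set α) :
    prob p E = ∑ a : α, E.indicator (fun a => (p a).toReal) a := by
  classical
  rw [prob, PMF.toOuterMeasure_apply, tsum_fintype, ENNReal.toReal_sum]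
  · refine Finset.sum_congr rfl fun a _ => ?_
    by_cases h : a ∈ E <;> simp [Set.indicator_of_mem, Set.indicator_of_notMem, h]
  · intro a _
    by_cases h : a ∈ E <;> simp [Set.indicator_of_mem, Set.indicator_of_notMem, h, PMF.apply_ne_top]

lemma sum_toReal_coe {α : Type*} [Fintype α] (p : PMF α) : ∑ a : α, (p a).toReal = 1 := by
  have h := p.tsum_coe
  rw [tsum_fintype] at h
  have : (∑ a : α, p a).toReal = ∑ a : α, (p a).toReal :=
    ENNReal.toReal_sum (fun a _ => PMF.apply_ne_top p a)
  rw [h] at this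
  simpa using this.symm

lemma prob_inter_ge {α : Type*} [Fintype α] (p : PMF α) (E1 E2 : Set α) :
    prob p E1 + prob p E2 - 1 ≤ prob p (E1 ∩ E2) := by
  classical
  rw [prob_fintype_sum, prob_fintype_sum, prob_fintype_sum, ← sum_toReal_coe p]
  rw [sub_le_iff_le_add, ← Finset.sum_add_distrib, ← Finset.sum_add_distrib]
  refine Finset.sum_le_sum fun a _ => ?_
  have hp : 0 ≤ (p a).toReal := ENNReal.toReal_nonneg
  by_cases h1 : a ∈ E1 <;> by_cases h2 : a ∈ E2 <;>
    simp [Set.indicator_of_mem, Set.indicator_of_notMem, h1, h2, Set.mem_inter_iff, hp]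

lemma prob_bind_uniform {α β : Type*} [Fintype α] [Nonempty α] (q : α → PMF β) (E : Set β) :
    prob ((PMF.uniformOfFintype α).bind q) E
      = (Fintype.card α : ℝ)⁻¹ * ∑ a : α, prob (q a) E := by
  rw [prob, PMF.toOuterMeasure_bind_apply, tsum_fintype, ENNReal.toReal_sum, Finset.mul_sum]
  · refine Finset.sum_congr rfl fun a _ => ?_
    rw [ENNReal.toReal_mul, PMF.uniformOfFintype_apply, prob]
    congr 1
    simp [ENNReal.toReal_inv]
  · intro a _
    exact ENNReal.mul_ne_top (PMF.apply_ne_top _ a) (toOM_ne_top _ E)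

lemma prob_points {α γ : Type*} [Fintype α] [Fintype γ] (p : PMF α) (m : α → γ) (E2 : Set γ) :
    prob p (m ⁻¹' E2) = ∑ c : γ, Set.indicator E2 (fun c => prob p (m ⁻¹' {c})) c := by
  classical
  have hpt : ∀ c : γ, prob p (m ⁻¹' {c}) = ∑ a : α, if m a = c then (p a).toReal else 0 := by
    intro c
    rw [prob_fintype_sum]
    refine Finset.sum_congr rfl fun a _ => ?_
    by_cases h : m a = c <;>
      simp [Set.indicator_of_mem, Set.indicator_of_notMem, Set.mem_preimage, h]
  have hind : ∀ c : γ, Set.indicator E2 (fun c => prob p (m ⁻¹' {c})) c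
      = ∑ a : α, if c ∈ E2 ∧ m a = c then (p a).toReal else 0 := by
    intro c
    by_cases h : c ∈ E2
    · rw [Set.indicator_of_mem h, hpt]
      exact Finset.sum_congr rfl fun a _ => by simp [h]
    · rw [Set.indicator_of_notMem h]
      symm
      exact Finset.sum_eq_zero fun a _ => by simp [h]
  rw [prob_fintype_sum]
  simp only [hind]
  rw [Finset.sum_comm]
  refine Finset.sum_congr rfl fun a _ => ?_
  have hsplit : ∀ x : γ, (if x ∈ E2 ∧ m a = x then (p a).toReal else 0)
      = if x = m a then (if m a ∈ E2 then (p a).toReal else 0) else 0 := by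
    intro x
    by_cases hx : x = m a <;> by_cases hE : m a ∈ E2 <;> simp [hx, hE] <;> tauto
  simp only [hsplit]
  rw [Finset.sum_ite_eq' Finset.univ (m a) (fun _ => if m a ∈ E2 then (p a).toReal else 0)]
  by_cases hE : m a ∈ E2 <;>
    simp [Set.indicator_of_mem, Set.indicator_of_notMem, Set.mem_preimage, hE]

lemma ns_prob {D A : Type*} [DecidableEq D] {k : ℕ}
    {F : (S : Finset D) → PMF ({x // x ∈ S} → A)} (hns : IsNonSignaling k F)
    {S T : Finset D} (hTS : T ⊆ S) (hS : S.card ≤ k) (hT : T.card ≤ k)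
    (E : Set ({x // x ∈ T} → A)) :
    prob (F T) E = prob (F S) (restrictAssign hTS ⁻¹' E) := by
  have h := hns S T hS hT
  set E' : Set ({x // x ∈ S ∩ T} → A) :=
    {g | (fun y : {x // x ∈ T} =>
      g ⟨y.1, Finset.mem_inter.mpr ⟨hTS y.2, y.2⟩⟩) ∈ E} with hE'
  have h1 : prob (marginal (F S) (Finset.inter_subset_left : S ∩ T ⊆ S)) E'
      = prob (marginal (F T) (Finset.inter_subset_right : S ∩ T ⊆ T)) E' := by rw [h]
  rw [marginal, marginal, prob_map, prob_map] at h1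
  have h2 : (restrictAssign (Finset.inter_subset_right : S ∩ T ⊆ T)) ⁻¹' E' = E := rfl
  have h3 : (restrictAssign (Finset.inter_subset_left : S ∩ T ⊆ S)) ⁻¹' E'
      = restrictAssign hTS ⁻¹' E := rfl
  rw [h2, h3] at h1
  exact h1.symm

section Fold

variable {t : ℕ} {D A : Type*} [DecidableEq D]
  {k : ℕ} {F : (S : Finset (Fin t → D)) → PMF ({Q // Q ∈ S} → (Fin t → A))}

set_option linter.unusedSectionVars false

lemma prob_F_congr {S S' : Finset (Fin t → D)} (h : S = S')
    (E : Set ({x // x ∈ S} → Fin t → A)) (E' : Set ({x // x ∈ S'} → Fin t → A))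
    (hE : ∀ f : {x // x ∈ S'} → Fin t → A,
      (fun x : {x // x ∈ S} => f ⟨x.1, h ▸ x.2⟩) ∈ E ↔ f ∈ E') :
    prob (F S) E = prob (F S') E' := by
  subst h
  have : E = E' := Set.ext fun f => by simpa using hE f
  rw [this]

lemma image_pair (q1 q2 : Fin t → D) :
    Finset.image ![q1, q2] Finset.univ = {q1, q2} := by
  ext x
  simp [Fin.exists_fin_two, eq_comm]

lemma fold_pair [Fintype D] [Fintype A] (hfold : IsPermFolded k F) (hk : 2 ≤ k)
    (π : Equiv.Perm (Fin t)) (q1 q2 q1' q2' : Fin t → D)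
    (hq1 : permQ π q1 = q1') (hq2 : permQ π q2 = q2')
    (E2 E2' : Set ((Fin t → A) × (Fin t → A)))
    (hE : ∀ b1 b2 : Fin t → A, (b1, b2) ∈ E2 ↔ (permQ π b1, permQ π b2) ∈ E2') :
    prob ((F {q1, q2}).map fun f =>
        (f ⟨q1, by simp⟩, f ⟨q2, by simp⟩)) E2
      = prob ((F {q1', q2'}).map fun f =>
        (f ⟨q1', by simp⟩, f ⟨q2', by simp⟩)) E2' := by
  classical
  subst hq1; subst hq2
  -- decompose both sides into point masses
  rw [prob_map, prob_map, prob_points, prob_points]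
  -- reindex by the bijection b ↦ permQ π b on pairs
  have hbij : Function.Bijective
      (fun b : (Fin t → A) × (Fin t → A) => (permQ π b.1, permQ π b.2)) := by
    refine Function.bijective_iff_has_inverse.mpr
      ⟨fun c => (permQ π.symm c.1, permQ π.symm c.2), fun b => ?_, fun c => ?_⟩ <;>
    · refine Prod.ext ?_ ?_ <;> · funext j; simp [permQ]
  refine (Fintype.sum_bijective _ hbij _ _ fun b => ?_)
  rcases b with ⟨b1, b2⟩
  by_cases hb : (b1, b2) ∈ E2
  · have hb' : (permQ π b1, permQ π b2) ∈ E2' := (hE b1 b2).mp hb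
    rw [Set.indicator_of_mem hb, Set.indicator_of_mem hb']
    have key := hfold 2 ![q1, q2] (fun _ => π) ![b1, b2] hk
    have h1 : prob (F {q1, q2})
        ((fun f : {x // x ∈ ({q1, q2} : Finset (Fin t → D))} → (Fin t → A) =>
          (f ⟨q1, by simp⟩, f ⟨q2, by simp⟩)) ⁻¹' {(b1, b2)})
        = prob (F (Finset.image ![q1, q2] Finset.univ))
          {f | ∀ i : Fin 2, f ⟨![q1, q2] i,
            Finset.mem_image_of_mem _ (Finset.mem_univ i)⟩ = ![b1, b2] i} := by
      refine prob_F_congr (image_pair q1 q2).symm _ _ fun f => ?_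
      simp [Fin.forall_fin_two, Prod.ext_iff]
    have himg : Finset.image (fun i => permQ ((fun _ : Fin 2 => π) i) (![q1, q2] i))
        Finset.univ = ({permQ π q1, permQ π q2} : Finset (Fin t → D)) := by
      ext x
      simp [Fin.exists_fin_two, eq_comm]
    have h2 : prob (F (Finset.image (fun i => permQ ((fun _ : Fin 2 => π) i) (![q1, q2] i))
          Finset.univ))
        {f | ∀ i : Fin 2, f ⟨permQ ((fun _ : Fin 2 => π) i) (![q1, q2] i),
            Finset.mem_image_of_mem _ (Finset.mem_univ i)⟩
          = permQ ((fun _ : Fin 2 => π) i) (![b1, b2] i)}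
        = prob (F {permQ π q1, permQ π q2})
          ((fun f : {x // x ∈ ({permQ π q1, permQ π q2} : Finset (Fin t → D))} → (Fin t → A) =>
            (f ⟨permQ π q1, by simp⟩, f ⟨permQ π q2, by simp⟩))
            ⁻¹' {(permQ π b1, permQ π b2)}) := by
      refine prob_F_congr himg _ _ fun f => ?_
      simp [Fin.forall_fin_two, Prod.ext_iff]
    rw [h1, key]
    exact h2
  · have hb' : (permQ π b1, permQ π b2) ∉ E2' := fun h => hb ((hE b1 b2).mpr h)
    rw [Set.indicator_of_notMem hb, Set.indicator_of_notMem hb']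

end Fold

def swapHalves (t : ℕ) : Equiv.Perm (Fin (t + t)) :=
  finSumFinEquiv.symm.trans ((Equiv.sumComm (Fin t) (Fin t)).trans finSumFinEquiv)

@[simp] lemma swapHalves_castAdd (t : ℕ) (j : Fin t) :
    swapHalves t (Fin.castAdd t j) = Fin.natAdd t j := by
  simp only [swapHalves, Equiv.trans_apply, finSumFinEquiv_symm_apply_castAdd,
    Equiv.sumComm_apply, Sum.swap_inl, finSumFinEquiv_apply_right]

@[simp] lemma swapHalves_natAdd (t : ℕ) (j : Fin t) :
    swapHalves t (Fin.natAdd t j) = Fin.castAdd t j := by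
  simp only [swapHalves, Equiv.trans_apply, finSumFinEquiv_symm_apply_natAdd,
    Equiv.sumComm_apply, Sum.swap_inr, finSumFinEquiv_apply_left]

lemma permQ_swapHalves_append {β : Type*} {t : ℕ} (a b : Fin t → β) :
    permQ (swapHalves t) (Fin.append a b) = Fin.append b a := by
  funext j
  refine Fin.addCases (fun i => ?_) (fun i => ?_) j <;>
    simp only [permQ, swapHalves_castAdd, swapHalves_natAdd, Fin.append_left, Fin.append_right]

lemma fold_append {n t k : ℕ} {F : NSFam n (t + t)} (hfold : IsPermFolded k F) (hk : 2 ≤ k)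
    (a b w : Fin t → Fin n → ZMod 2) :
    prob ((F {Fin.append a w, Fin.append b w}).map fun f =>
        (f ⟨Fin.append a w, by simp⟩, f ⟨Fin.append b w, by simp⟩))
      {y : (Fin (t + t) → ZMod 2) × (Fin (t + t) → ZMod 2) |
        ∀ j : Fin t, y.1 (Fin.natAdd t j) = y.2 (Fin.natAdd t j)}
      = prob ((F {Fin.append w a, Fin.append w b}).map fun f =>
        (f ⟨Fin.append w a, by simp⟩, f ⟨Fin.append w b, by simp⟩))
      {y : (Fin (t + t) → ZMod 2) × (Fin (t + t) → ZMod 2) |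
        ∀ j : Fin t, y.1 (Fin.castAdd t j) = y.2 (Fin.castAdd t j)} := by
  refine fold_pair hfold hk (swapHalves t) _ _ _ _
    (permQ_swapHalves_append a w) (permQ_swapHalves_append b w) _ _ fun b1 b2 => ?_
  constructor
  · intro h j
    simpa [permQ] using h j
  · intro h j
    simpa [permQ] using h j

noncomputable def gcons {n t : ℕ} (F : NSFam n (t + t)) (w z1 z2 : Fin t → Fin n → ZMod 2) : ℝ :=
  prob ((F {Fin.append w z1, Fin.append w z2}).map fun f =>
      (f ⟨Fin.append w z1, by simp⟩, f ⟨Fin.append w z2, by simp⟩))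
    {y : (Fin (t + t) → ZMod 2) × (Fin (t + t) → ZMod 2) |
      ∀ j : Fin t, y.1 (Fin.castAdd t j) = y.2 (Fin.castAdd t j)}

lemma gcons_triple {n t k : ℕ} {F : NSFam n (t + t)} (hns : IsNonSignaling k F) (hk : 6 ≤ k)
    (w z1 z2 z3 : Fin t → Fin n → ZMod 2) :
    gcons F w z1 z3 + gcons F w z2 z3 - 1 ≤ gcons F w z1 z2 := by
  classical
  set x1 := Fin.append w z1 with hx1
  set x2 := Fin.append w z2 with hx2
  set x3 := Fin.append w z3 with hx3
  set S3 : Finset (Fin (t + t) → Fin n → ZMod 2) := {x1, x2, x3} with hS3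
  have hs12 : ({x1, x2} : Finset _) ⊆ S3 := by
    intro x hx; simp only [hS3, Finset.mem_insert, Finset.mem_singleton] at hx ⊢; tauto
  have hs13 : ({x1, x3} : Finset _) ⊆ S3 := by
    intro x hx; simp only [hS3, Finset.mem_insert, Finset.mem_singleton] at hx ⊢; tauto
  have hs23 : ({x2, x3} : Finset _) ⊆ S3 := by
    intro x hx; simp only [hS3, Finset.mem_insert, Finset.mem_singleton] at hx ⊢; tauto
  have hc3 : S3.card ≤ k := by
    refine le_trans ?_ hk
    refine le_trans (Finset.card_insert_le _ _) ?_
    have h2 : ({x2, x3} : Finset _).card ≤ 2 := by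
      refine le_trans (Finset.card_insert_le _ _) ?_
      simp
    omega
  have hcp : ∀ y z : Fin (t + t) → Fin n → ZMod 2, ({y, z} : Finset _).card ≤ k := by
    intro y z
    refine le_trans ?_ hk
    refine le_trans (Finset.card_insert_le _ _) ?_
    simp
  have e12 : gcons F w z1 z2 = prob (F S3)
      (restrictAssign hs12 ⁻¹' ((fun f : {x // x ∈ ({x1, x2} : Finset _)} → (Fin (t+t) → ZMod 2) =>
        (f ⟨x1, by simp⟩, f ⟨x2, by simp⟩)) ⁻¹'
        {y : (Fin (t + t) → ZMod 2) × (Fin (t + t) → ZMod 2) |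
          ∀ j : Fin t, y.1 (Fin.castAdd t j) = y.2 (Fin.castAdd t j)})) := by
    rw [← ns_prob hns hs12 hc3 (hcp x1 x2), ← prob_map]
    rfl
  have e13 : gcons F w z1 z3 = prob (F S3)
      (restrictAssign hs13 ⁻¹' ((fun f : {x // x ∈ ({x1, x3} : Finset _)} → (Fin (t+t) → ZMod 2) =>
        (f ⟨x1, by simp⟩, f ⟨x3, by simp⟩)) ⁻¹'
        {y : (Fin (t + t) → ZMod 2) × (Fin (t + t) → ZMod 2) |
          ∀ j : Fin t, y.1 (Fin.castAdd t j) = y.2 (Fin.castAdd t j)})) := by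
    rw [← ns_prob hns hs13 hc3 (hcp x1 x3), ← prob_map]
    rfl
  have e23 : gcons F w z2 z3 = prob (F S3)
      (restrictAssign hs23 ⁻¹' ((fun f : {x // x ∈ ({x2, x3} : Finset _)} → (Fin (t+t) → ZMod 2) =>
        (f ⟨x2, by simp⟩, f ⟨x3, by simp⟩)) ⁻¹'
        {y : (Fin (t + t) → ZMod 2) × (Fin (t + t) → ZMod 2) |
          ∀ j : Fin t, y.1 (Fin.castAdd t j) = y.2 (Fin.castAdd t j)})) := by
    rw [← ns_prob hns hs23 hc3 (hcp x2 x3), ← prob_map]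
    rfl
  rw [e12, e13, e23]
  refine le_trans (prob_inter_ge _ _ _) (prob_mono _ ?_)
  intro f hf j
  exact (hf.1 j).trans (hf.2 j).symm

lemma consTest_eq {n t : ℕ} (F : NSFam n (t + t)) :
    consTestAccept F
      = ((Fintype.card ((Fin t → Fin n → ZMod 2) × (Fin t → Fin n → ZMod 2) ×
          (Fin t → Fin n → ZMod 2)) : ℝ))⁻¹
        * ∑ v : (Fin t → Fin n → ZMod 2) × (Fin t → Fin n → ZMod 2) ×
            (Fin t → Fin n → ZMod 2), gcons F v.1 v.2.1 v.2.2 := by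
  unfold consTestAccept
  rw [prob_bind_uniform]
  congr 1

set_option maxHeartbeats 2000000 in
/-- if a permutation-folded `2t`-repeated `k`-non-signaling function
(`k ≥ 6`) passes the linearity test and the consistency test each with probability at
least `1-ε`, then for any fixed `Q` and uniformly random `R, W`, the answers to
`[Q+R;W]` and `[R;W]` agree on the second half of the coordinates with probability at
least `1-4ε`. -/
theorem shifted_agreement {n t k : ℕ} (ε : ℝ) (F : NSFam n (t + t))
    (hns : IsNonSignaling k F) (hk : 6 ≤ k)
    (hfold : IsPermFolded k F)
    (hlin : linTestAccept F ≥ 1 - ε)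
    (hcons : consTestAccept F ≥ 1 - ε) :
    ∀ Q : Fin t → Fin n → ZMod 2,
      prob ((PMF.uniformOfFintype ((Fin t → Fin n → ZMod 2) ×
          (Fin t → Fin n → ZMod 2))).bind fun rw =>
          (F {Fin.append (Q + rw.1) rw.2, Fin.append rw.1 rw.2}).map fun f =>
            (f ⟨Fin.append (Q + rw.1) rw.2, by simp⟩, f ⟨Fin.append rw.1 rw.2, by simp⟩))
        {y : (Fin (t + t) → ZMod 2) × (Fin (t + t) → ZMod 2) |
          ∀ j : Fin t, y.1 (Fin.natAdd t j) = y.2 (Fin.natAdd t j)}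
        ≥ 1 - 4 * ε := by
  classical
  intro Q
  have hk2 : 2 ≤ k := by omega
  have heps : (0 : ℝ) ≤ ε := by
    have h1 : consTestAccept F ≤ 1 := prob_le_one _ _
    linarith
  -- notation
  have hQQ : ∀ x : (Fin t → Fin n → ZMod 2), Q + (Q + x) = x := by
    intro x
    funext i j
    show Q i j + (Q i j + x i j) = x i j
    rw [← add_assoc, CharTwo.add_self_eq_zero, zero_add]
  rw [ge_iff_le, prob_bind_uniform]
  -- fold each term
  have hterm : ∀ rw : (Fin t → Fin n → ZMod 2) × (Fin t → Fin n → ZMod 2),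
      prob ((F {Fin.append (Q + rw.1) rw.2, Fin.append rw.1 rw.2}).map fun f =>
          (f ⟨Fin.append (Q + rw.1) rw.2, by simp⟩, f ⟨Fin.append rw.1 rw.2, by simp⟩))
        {y : (Fin (t + t) → ZMod 2) × (Fin (t + t) → ZMod 2) |
          ∀ j : Fin t, y.1 (Fin.natAdd t j) = y.2 (Fin.natAdd t j)}
        = gcons F rw.2 (Q + rw.1) rw.1 :=
    fun rw => fold_append hfold hk2 _ _ _
  -- abbreviations for sums
  obtain ⟨A, hA⟩ : ∃ a : ℝ, a = ∑ rw : (Fin t → Fin n → ZMod 2) × (Fin t → Fin n → ZMod 2), gcons F rw.2 (Q + rw.1) rw.1 := ⟨_, rfl⟩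
  obtain ⟨C, hC⟩ : ∃ c : ℝ, c = ∑ v : (Fin t → Fin n → ZMod 2) × (Fin t → Fin n → ZMod 2) × (Fin t → Fin n → ZMod 2), gcons F v.1 v.2.1 v.2.2 := ⟨_, rfl⟩
  obtain ⟨cU, hcU⟩ : ∃ c : ℝ, c = (Fintype.card (Fin t → Fin n → ZMod 2) : ℝ) := ⟨_, rfl⟩
  have hcUpos : 0 < cU := by
    rw [hcU]; exact_mod_cast Fintype.card_pos
  -- triple sum of the pair function
  have hTriple : ∑ v : (Fin t → Fin n → ZMod 2) × (Fin t → Fin n → ZMod 2) × (Fin t → Fin n → ZMod 2), gcons F v.2.1 (Q + v.1) v.1 = cU * A := by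
    rw [hA]
    calc ∑ v : (Fin t → Fin n → ZMod 2) × (Fin t → Fin n → ZMod 2) × (Fin t → Fin n → ZMod 2), gcons F v.2.1 (Q + v.1) v.1
        = ∑ r : (Fin t → Fin n → ZMod 2), ∑ p : (Fin t → Fin n → ZMod 2) × (Fin t → Fin n → ZMod 2), gcons F p.1 (Q + r) r := by rw [Fintype.sum_prod_type]
      _ = ∑ r : (Fin t → Fin n → ZMod 2), ∑ w : (Fin t → Fin n → ZMod 2), ∑ y : (Fin t → Fin n → ZMod 2), gcons F w (Q + r) r := by
          refine Finset.sum_congr rfl fun r _ => ?_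
          rw [Fintype.sum_prod_type]
      _ = ∑ r : (Fin t → Fin n → ZMod 2), ∑ w : (Fin t → Fin n → ZMod 2), cU * gcons F w (Q + r) r := by
          refine Finset.sum_congr rfl fun r _ => Finset.sum_congr rfl fun w _ => ?_
          rw [Finset.sum_const, hcU, Finset.card_univ, nsmul_eq_mul]
      _ = cU * ∑ rw : (Fin t → Fin n → ZMod 2) × (Fin t → Fin n → ZMod 2), gcons F rw.2 (Q + rw.1) rw.1 := by
          rw [Finset.mul_sum, Fintype.sum_prod_type]
  -- change of variables for the two auxiliary sums
  have hB1 : ∑ v : (Fin t → Fin n → ZMod 2) × (Fin t → Fin n → ZMod 2) × (Fin t → Fin n → ZMod 2), gcons F v.2.1 (Q + v.1) v.2.2 = C := by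
    rw [hC]
    have hbij : Function.Bijective
        (fun v : (Fin t → Fin n → ZMod 2) × (Fin t → Fin n → ZMod 2) × (Fin t → Fin n → ZMod 2) => ((v.2.1, Q + v.1, v.2.2) : (Fin t → Fin n → ZMod 2) × (Fin t → Fin n → ZMod 2) × (Fin t → Fin n → ZMod 2))) := by
      refine Function.bijective_iff_has_inverse.mpr
        ⟨fun u => (Q + u.2.1, u.1, u.2.2), fun v => ?_, fun u => ?_⟩ <;>
        simp [hQQ]
    exact Fintype.sum_bijective _ hbij _ _ fun v => rfl
  have hB2 : ∑ v : (Fin t → Fin n → ZMod 2) × (Fin t → Fin n → ZMod 2) × (Fin t → Fin n → ZMod 2), gcons F v.2.1 v.1 v.2.2 = C := by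
    rw [hC]
    have hbij : Function.Bijective
        (fun v : (Fin t → Fin n → ZMod 2) × (Fin t → Fin n → ZMod 2) × (Fin t → Fin n → ZMod 2) => ((v.2.1, v.1, v.2.2) : (Fin t → Fin n → ZMod 2) × (Fin t → Fin n → ZMod 2) × (Fin t → Fin n → ZMod 2))) := by
      refine Function.bijective_iff_has_inverse.mpr
        ⟨fun u => (u.2.1, u.1, u.2.2), fun v => rfl, fun u => rfl⟩
    exact Fintype.sum_bijective _ hbij _ _ fun v => rfl
  -- pointwise triple bound
  have hPt : ∑ v : (Fin t → Fin n → ZMod 2) × (Fin t → Fin n → ZMod 2) × (Fin t → Fin n → ZMod 2), (gcons F v.2.1 (Q + v.1) v.2.2 + gcons F v.2.1 v.1 v.2.2 - 1)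
      ≤ ∑ v : (Fin t → Fin n → ZMod 2) × (Fin t → Fin n → ZMod 2) × (Fin t → Fin n → ZMod 2), gcons F v.2.1 (Q + v.1) v.1 :=
    Finset.sum_le_sum fun v _ => gcons_triple hns hk v.2.1 (Q + v.1) v.1 v.2.2
  have hcardV : ((Fintype.card ((Fin t → Fin n → ZMod 2) × (Fin t → Fin n → ZMod 2) × (Fin t → Fin n → ZMod 2)) : ℝ)) = cU * cU * cU := by
    simp [hcU, Fintype.card_prod, mul_assoc]
  have hSplit : ∑ v : (Fin t → Fin n → ZMod 2) × (Fin t → Fin n → ZMod 2) × (Fin t → Fin n → ZMod 2), (gcons F v.2.1 (Q + v.1) v.2.2 + gcons F v.2.1 v.1 v.2.2 - 1)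
      = C + C - cU * cU * cU := by
    rw [Finset.sum_sub_distrib, Finset.sum_add_distrib, hB1, hB2]
    congr 1
    rw [Finset.sum_const, Finset.card_univ, nsmul_eq_mul, mul_one, hcardV]
  -- consistency bound
  have hconsEq := consTest_eq F
  have hcV : (0 : ℝ) < cU * cU * cU := by positivity
  have hcons2 : 1 - ε ≤ (cU * cU * cU)⁻¹ * C := by
    rw [← hcardV, hC, ← hconsEq]
    exact hcons
  have hcard2 : ((Fintype.card ((Fin t → Fin n → ZMod 2) × (Fin t → Fin n → ZMod 2)) : ℝ)) = cU * cU := by simp [hcU, Fintype.card_prod]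
  -- main arithmetic
  have hstep : C + C - cU * cU * cU ≤ cU * A := le_trans (le_of_eq hSplit.symm)
    (le_trans hPt (le_of_eq hTriple))
  have hineq : (cU * cU * cU)⁻¹ * (C + C - cU * cU * cU) ≤ (cU * cU * cU)⁻¹ * (cU * A) :=
    mul_le_mul_of_nonneg_left hstep (by positivity)
  have hL : (cU * cU * cU)⁻¹ * (C + C - cU * cU * cU)
      = (cU * cU * cU)⁻¹ * C + (cU * cU * cU)⁻¹ * C - 1 := by
    rw [mul_sub, mul_add, inv_mul_cancel₀ hcV.ne']
  have hR : (cU * cU * cU)⁻¹ * (cU * A) = (cU * cU)⁻¹ * A := by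
    field_simp
  rw [hL, hR] at hineq
  have main : 1 - 4 * ε ≤ (cU * cU)⁻¹ * A := by linarith
  refine le_trans main (le_of_eq ?_)
  rw [← hcard2]
  congr 1
  exact hA.trans (Finset.sum_congr rfl fun rw _ => (hterm rw).symm)
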